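/- Let R be a (not necessarily commutative) ring with identity and let a ∈ R be a weakly nil-clean element. Then −a is a weakly clean element of R. -/
import Mathlib


/-- An element is weakly nil-clean if it is `q + e` or `q - e` for a nilpotent `q`
and an idempotent `e`. -/
def IsWeaklyNilCleanElem {R : Type*} [Ring R] (a : R) : Prop :=
  ∃ e q : R, IsIdempotentElem e ∧ IsNilpotent q ∧ (a = q + e ∨ a = q - e)

/-- An element is weakly clean if there is an idempotent `e` such that `a - e` or `a + e`
is a unit. -/
def IsWeaklyCleanElem {R : Type*} [Ring R] (a : R) : Prop :=
  ∃ e : R, IsIdempotentElem e ∧ (IsUnit (a - e) ∨ IsUnit (a + e))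

theorem neg_isWeaklyCleanElem_of_isWeaklyNilCleanElem {R : Type*} [Ring R] (a : R)
    (h : IsWeaklyNilCleanElem a) : IsWeaklyCleanElem (-a) := by
  obtain ⟨e, q, he, hq, hc | hc⟩ := h
  · refine ⟨1 - e, he.one_sub, Or.inl ?_⟩
    have : -a - (1 - e) = -q - 1 := by rw [hc]; abel
    rw [this]
    simpa using hq.neg.isUnit_sub_one
  · refine ⟨1 - e, he.one_sub, Or.inr ?_⟩
    have : -a + (1 - e) = 1 - q := by rw [hc]; abel
    rw [this]
    exact hq.isUnit_one_sub
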